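/- Let F be an antisymmetric 8×8 matrix with entries in a complex (or real) vector space of matrices, and let T be defined by (T F)_{μν} = (1/2) Σ_{ρ,σ} Ω_{μνρσ} F_{ρσ}. Then T F = −F holds if and only if F satisfies the following seven linear equations: F_{01}+F_{23}+F_{45}+F_{67}=0, F_{02}−F_{13}+F_{46}−F_{57}=0, F_{03}+F_{12}−F_{47}−F_{56}=0, F_{05}+F_{14}+F_{27}+F_{36}=0, F_{06}−F_{17}+F_{24}−F_{35}=0, F_{07}+F_{16}−F_{25}−F_{34}=0, F_{04}−F_{15}−F_{26}+F_{37}=0. -/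

import Mathlib

theorem det_fin_four' (M : Matrix (Fin 4) (Fin 4) ℝ) :
    M.det =
      M 0 0 * M 1 1 * M 2 2 * M 3 3 - M 0 0 * M 1 1 * M 2 3 * M 3 2 -
        M 0 0 * M 1 2 * M 2 1 * M 3 3 + M 0 0 * M 1 2 * M 2 3 * M 3 1 +
        M 0 0 * M 1 3 * M 2 1 * M 3 2 - M 0 0 * M 1 3 * M 2 2 * M 3 1 -
        M 0 1 * M 1 0 * M 2 2 * M 3 3 + M 0 1 * M 1 0 * M 2 3 * M 3 2 +
        M 0 1 * M 1 2 * M 2 0 * M 3 3 - M 0 1 * M 1 2 * M 2 3 * M 3 0 -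
        M 0 1 * M 1 3 * M 2 0 * M 3 2 + M 0 1 * M 1 3 * M 2 2 * M 3 0 +
        M 0 2 * M 1 0 * M 2 1 * M 3 3 - M 0 2 * M 1 0 * M 2 3 * M 3 1 -
        M 0 2 * M 1 1 * M 2 0 * M 3 3 + M 0 2 * M 1 1 * M 2 3 * M 3 0 +
        M 0 2 * M 1 3 * M 2 0 * M 3 1 - M 0 2 * M 1 3 * M 2 1 * M 3 0 -
        M 0 3 * M 1 0 * M 2 1 * M 3 2 + M 0 3 * M 1 0 * M 2 2 * M 3 1 +
        M 0 3 * M 1 1 * M 2 0 * M 3 2 - M 0 3 * M 1 1 * M 2 2 * M 3 0 -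
        M 0 3 * M 1 2 * M 2 0 * M 3 1 + M 0 3 * M 1 2 * M 2 1 * M 3 0 := by
  rw [Matrix.det_succ_row_zero]
  simp only [Fin.sum_univ_four, Matrix.det_fin_three, Matrix.submatrix_apply]
  norm_num [Fin.succAbove, Fin.lt_def, show (Fin.succ 2 : Fin 4) = 3 from rfl,
    show ((3 : Fin 4) : ℕ) = 3 from rfl, show (Fin.castSucc 2 : Fin 4) = 2 from rfl]
  ring

theorem vec4_0 (a b c d : Fin 8) : ![a,b,c,d] 0 = a := rfl
theorem vec4_1 (a b c d : Fin 8) : ![a,b,c,d] 1 = b := rfl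
theorem vec4_2 (a b c d : Fin 8) : ![a,b,c,d] 2 = c := rfl
theorem vec4_3 (a b c d : Fin 8) : ![a,b,c,d] 3 = d := rfl

noncomputable def Esum (p : Fin 4 → Fin 8) (F : Fin 8 → Fin 8 → ℝ) (μ ν : Fin 8) : ℝ :=
  (if p 1 = ν then if p 0 = μ then F (p 2) (p 3) else 0 else 0) - (if p 1 = ν then if p 0 = μ then F (p 3) (p 2) else 0 else 0) - (if p 2 = ν then if p 0 = μ then F (p 1) (p 3) else 0 else 0) + (if p 2 = ν then if p 0 = μ then F (p 3) (p 1) else 0 else 0) + (if p 3 = ν then if p 0 = μ then F (p 1) (p 2) else 0 else 0) - (if p 3 = ν then if p 0 = μ then F (p 2) (p 1) else 0 else 0) - (if p 1 = μ then if p 0 = ν then F (p 2) (p 3) else 0 else 0) + (if p 1 = μ then if p 0 = ν then F (p 3) (p 2) else 0 else 0) + (if p 2 = ν then if p 1 = μ then F (p 0) (p 3) else 0 else 0) - (if p 2 = ν then if p 1 = μ then F (p 3) (p 0) else 0 else 0) - (if p 3 = ν then if p 1 = μ then F (p 0) (p 2) else 0 else 0) + (if p 3 = ν then if p 1 = μ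 then F (p 2) (p 0) else 0 else 0) + (if p 2 = μ then if p 0 = ν then F (p 1) (p 3) else 0 else 0) - (if p 2 = μ then if p 0 = ν then F (p 3) (p 1) else 0 else 0) - (if p 2 = μ then if p 1 = ν then F (p 0) (p 3) else 0 else 0) + (if p 2 = μ then if p 1 = ν then F (p 3) (p 0) else 0 else 0) + (if p 3 = ν then if p 2 = μ then F (p 0) (p 1) else 0 else 0) - (if p 3 = ν then if p 2 = μ then F (p 1) (p 0) else 0 else 0) - (if p 3 = μ then if p 0 = ν then F (p 1) (p 2) else 0 else 0) + (if p 3 = μ then if p 0 = ν then F (p 2) (p 1) else 0 else 0) + (if p 3 = μ then if p 1 = ν then F (p 0) (p 2) else 0 else 0) - (if p 3 = μ then if p 1 = ν then F (p 2) (p 0) else 0 else 0) - (if p 3 = μ then if p 2 = ν then F (p 0) (p 1) else 0 else 0) + (if p 3 = μ then if p 2 = ν then F (p 1) (p 0) else 0 else 0)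

theorem sum_det (p : Fin 4 → Fin 8) (F : Fin 8 → Fin 8 → ℝ) (μ ν : Fin 8) :
    (∑ ρ : Fin 8, ∑ σ : Fin 8,
      (Matrix.of fun i j => if p i = ![μ,ν,ρ,σ] j then (1:ℝ) else 0).det * F ρ σ) = Esum p F μ ν := by
  simp only [det_fin_four', Matrix.of_apply,
    (fun a b c d => (vec4_0 a b c d).trans rfl : ∀ a b c d : Fin 8, ![a,b,c,d] 0 = a),
    (fun a b c d => (vec4_1 a b c d).trans rfl : ∀ a b c d : Fin 8, ![a,b,c,d] 1 = b),
    (fun a b c d => (vec4_2 a b c d).trans rfl : ∀ a b c d : Fin 8, ![a,b,c,d] 2 = c),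
    (fun a b c d => (vec4_3 a b c d).trans rfl : ∀ a b c d : Fin 8, ![a,b,c,d] 3 = d), Esum,
    ite_mul, mul_ite, one_mul, mul_one, zero_mul, mul_zero, sub_mul, add_mul, neg_mul,
    Finset.sum_add_distrib, Finset.sum_sub_distrib, Finset.sum_neg_distrib,
    Finset.sum_ite_irrel, Finset.sum_const_zero, Finset.sum_ite_eq, Finset.mem_univ, if_true]
  ring

theorem fin8_cases : ∀ μ : Fin 8,
    μ = 0 ∨ μ = 1 ∨ μ = 2 ∨ μ = 3 ∨ μ = 4 ∨ μ = 5 ∨ μ = 6 ∨ μ = 7 := by decide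

/-- The 14 basic (ascending) index quadruples of the Spin(7) four-form `Ω` on ℝ⁸,
together with their values. -/
def OmegaBase : List ((Fin 4 → Fin 8) × ℝ) :=
  [(![0,1,2,3], 1), (![0,1,4,5], 1), (![0,1,6,7], 1), (![0,2,4,6], 1),
   (![0,2,5,7], -1), (![0,3,4,7], -1), (![0,3,5,6], -1),
   (![1,2,4,7], -1), (![1,2,5,6], -1), (![1,3,4,6], -1),
   (![1,3,5,7], 1), (![2,3,4,5], 1), (![2,3,6,7], 1), (![4,5,6,7], 1)]

/-- The totally antisymmetric array `Ω_{μνρσ}`. -/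
noncomputable def Omega (μ ν ρ σ : Fin 8) : ℝ :=
  (OmegaBase.map fun p =>
    p.2 * Matrix.det (Matrix.of fun i j =>
      if p.1 i = ![μ, ν, ρ, σ] j then (1 : ℝ) else 0)).sum

/-- The linear operator `T`: `(T F)_{μν} = (1/2) Σ_{ρσ} Ω_{μνρσ} F_{ρσ}`. -/
noncomputable def TOmega (F : Fin 8 → Fin 8 → ℝ) (μ ν : Fin 8) : ℝ :=
  (1 / 2) * ∑ ρ : Fin 8, ∑ σ : Fin 8, Omega μ ν ρ σ * F ρ σ

set_option maxRecDepth 100000 in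
set_option maxHeartbeats 2000000 in
theorem TOmega_expand (F : Fin 8 → Fin 8 → ℝ) (μ ν : Fin 8) :
    TOmega F μ ν = (1/2) *
      (Esum ![0,1,2,3] F μ ν + Esum ![0,1,4,5] F μ ν + Esum ![0,1,6,7] F μ ν +
       Esum ![0,2,4,6] F μ ν - Esum ![0,2,5,7] F μ ν - Esum ![0,3,4,7] F μ ν -
       Esum ![0,3,5,6] F μ ν - Esum ![1,2,4,7] F μ ν - Esum ![1,2,5,6] F μ ν -
       Esum ![1,3,4,6] F μ ν + Esum ![1,3,5,7] F μ ν + Esum ![2,3,4,5] F μ ν +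
       Esum ![2,3,6,7] F μ ν + Esum ![4,5,6,7] F μ ν) := by
  simp only [TOmega, Omega, OmegaBase, List.map_cons, List.map_nil, List.sum_cons,
    List.sum_nil, add_zero, one_mul, neg_one_mul, neg_mul, add_mul, neg_add_rev,
    Finset.sum_add_distrib, Finset.sum_neg_distrib, sum_det]
  ring

set_option maxRecDepth 100000 in
set_option maxHeartbeats 0 in
/-- For an antisymmetric `8 × 8` matrix `F`, the condition `T F = -F` is equivalent to the
seven octonionic (Spin(7)) self-duality equations. -/
theorem TOmega_eq_neg_iff_seven_equations (F : Fin 8 → Fin 8 → ℝ)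
    (hF : ∀ μ ν, F μ ν = -F ν μ) :
    (∀ μ ν, TOmega F μ ν = -F μ ν) ↔
      (F 0 1 + F 2 3 + F 4 5 + F 6 7 = 0 ∧
       F 0 2 - F 1 3 + F 4 6 - F 5 7 = 0 ∧
       F 0 3 + F 1 2 - F 4 7 - F 5 6 = 0 ∧
       F 0 5 + F 1 4 + F 2 7 + F 3 6 = 0 ∧
       F 0 6 - F 1 7 + F 2 4 - F 3 5 = 0 ∧
       F 0 7 + F 1 6 - F 2 5 - F 3 4 = 0 ∧
       F 0 4 - F 1 5 - F 2 6 + F 3 7 = 0) := by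
  have h10 : F 1 0 = -F 0 1 := hF 1 0
  have h20 : F 2 0 = -F 0 2 := hF 2 0
  have h30 : F 3 0 = -F 0 3 := hF 3 0
  have h40 : F 4 0 = -F 0 4 := hF 4 0
  have h50 : F 5 0 = -F 0 5 := hF 5 0
  have h60 : F 6 0 = -F 0 6 := hF 6 0
  have h70 : F 7 0 = -F 0 7 := hF 7 0
  have h21 : F 2 1 = -F 1 2 := hF 2 1
  have h31 : F 3 1 = -F 1 3 := hF 3 1
  have h41 : F 4 1 = -F 1 4 := hF 4 1
  have h51 : F 5 1 = -F 1 5 := hF 5 1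
  have h61 : F 6 1 = -F 1 6 := hF 6 1
  have h71 : F 7 1 = -F 1 7 := hF 7 1
  have h32 : F 3 2 = -F 2 3 := hF 3 2
  have h42 : F 4 2 = -F 2 4 := hF 4 2
  have h52 : F 5 2 = -F 2 5 := hF 5 2
  have h62 : F 6 2 = -F 2 6 := hF 6 2
  have h72 : F 7 2 = -F 2 7 := hF 7 2
  have h43 : F 4 3 = -F 3 4 := hF 4 3
  have h53 : F 5 3 = -F 3 5 := hF 5 3
  have h63 : F 6 3 = -F 3 6 := hF 6 3
  have h73 : F 7 3 = -F 3 7 := hF 7 3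
  have h54 : F 5 4 = -F 4 5 := hF 5 4
  have h64 : F 6 4 = -F 4 6 := hF 6 4
  have h74 : F 7 4 = -F 4 7 := hF 7 4
  have h65 : F 6 5 = -F 5 6 := hF 6 5
  have h75 : F 7 5 = -F 5 7 := hF 7 5
  have h76 : F 7 6 = -F 6 7 := hF 7 6
  have d0 : F 0 0 = 0 := by have := hF 0 0; linarith
  have d1 : F 1 1 = 0 := by have := hF 1 1; linarith
  have d2 : F 2 2 = 0 := by have := hF 2 2; linarith
  have d3 : F 3 3 = 0 := by have := hF 3 3; linarith
  have d4 : F 4 4 = 0 := by have := hF 4 4; linarith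
  have d5 : F 5 5 = 0 := by have := hF 5 5; linarith
  have d6 : F 6 6 = 0 := by have := hF 6 6; linarith
  have d7 : F 7 7 = 0 := by have := hF 7 7; linarith
  constructor
  · intro h
    have t01 := h 0 1
    have t02 := h 0 2
    have t03 := h 0 3
    have t04 := h 0 4
    have t05 := h 0 5
    have t06 := h 0 6
    have t07 := h 0 7
    simp only [TOmega_expand, Esum, vec4_0, vec4_1, vec4_2, vec4_3, Fin.reduceEq, if_true, if_false, ite_true, ite_false] at t01 t02 t03 t04 t05 t06 t07
    exact ⟨by linarith, by linarith, by linarith, by linarith, by linarith, by linarith,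
      by linarith⟩
  · rintro ⟨e1, e2, e3, e4, e5, e6, e7⟩ μ ν
    rcases fin8_cases μ with rfl|rfl|rfl|rfl|rfl|rfl|rfl|rfl <;>
    rcases fin8_cases ν with rfl|rfl|rfl|rfl|rfl|rfl|rfl|rfl <;>
    · simp only [TOmega_expand, Esum, vec4_0, vec4_1, vec4_2, vec4_3, Fin.reduceEq, if_true, if_false, ite_true, ite_false]
      linarith
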